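/- For an odd prime p, an integer r ≥ 1, and δ ∈ ℤ/p^rℤ with p ∤ δ a quadratic residue mod p, the number of triples (A,B,C) ∈ (ℤ/p^rℤ)³ with p ∤ gcd(A,B,C) and B² − 4AC ≡ δ (mod p^r) equals p^{2r−1}(p+1). -/

import Mathlib

section aux
variable {p r : ℕ}


lemma zmod_dvd_iff (hr : 1 ≤ r) [NeZero (p ^ r)] (x : ZMod (p ^ r)) :
    (p : ZMod (p ^ r)) ∣ x ↔ p ∣ x.val := by
  have hd : p ∣ p ^ r := dvd_pow_self p (by omega)
  constructor
  · rintro ⟨y, rfl⟩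
    rw [ZMod.val_mul]
    refine (Nat.dvd_mod_iff hd).mpr (Dvd.dvd.mul_right ?_ _)
    rw [ZMod.val_natCast]
    exact (Nat.dvd_mod_iff hd).mpr dvd_rfl
  · rintro ⟨m, hm⟩
    refine ⟨(m : ZMod (p ^ r)), ?_⟩
    rw [← ZMod.natCast_rightInverse x, hm]
    push_cast
    ring

lemma zmod_isUnit_iff (hp : p.Prime) (hr : 1 ≤ r) [NeZero (p ^ r)] (x : ZMod (p ^ r)) :
    IsUnit x ↔ ¬ (p : ZMod (p ^ r)) ∣ x := by
  rw [zmod_dvd_iff hr x]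
  conv_lhs => rw [← ZMod.natCast_rightInverse x]
  rw [ZMod.isUnit_iff_coprime, Nat.coprime_pow_right_iff (by omega)]
  rw [Nat.coprime_comm, hp.coprime_iff_not_dvd]

lemma sq_lift {p r : ℕ} (hp : p.Prime) (hodd : Odd p) (hr : 1 ≤ r)
    (u : ZMod (p ^ r)) (hu : IsUnit u)
    (hsq : IsSquare (ZMod.castHom (dvd_pow_self p (Nat.one_le_iff_ne_zero.mp hr)) (ZMod p) u)) :
    IsSquare u := by
  haveI : NeZero (p ^ r) := ⟨pow_ne_zero r hp.ne_zero⟩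
  haveI : Fact p.Prime := ⟨hp⟩
  set hd := dvd_pow_self p (Nat.one_le_iff_ne_zero.mp hr) with hhd
  set f := ZMod.unitsMap (n := p) (m := p ^ r) hd with hf
  have hsurj := ZMod.unitsMap_surjective (n := p) (m := p ^ r) hd
  -- kernel cardinality
  have hker : Nat.card f.ker = p ^ (r - 1) := by
    have h1 : Nat.card ((ZMod (p ^ r))ˣ ⧸ f.ker) * Nat.card f.ker
        = Nat.card (ZMod (p ^ r))ˣ :=
      (Subgroup.card_eq_card_quotient_mul_card_subgroup f.ker).symm
    have h2 : Nat.card ((ZMod (p ^ r))ˣ ⧸ f.ker) = p - 1 := by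
      rw [Nat.card_congr (QuotientGroup.quotientKerEquivOfSurjective f hsurj).toEquiv,
        Nat.card_eq_fintype_card, ZMod.card_units_eq_totient, Nat.totient_prime hp]
    have h3 : Nat.card (ZMod (p ^ r))ˣ = p ^ (r - 1) * (p - 1) := by
      rw [Nat.card_eq_fintype_card, ZMod.card_units_eq_totient,
        Nat.totient_prime_pow hp (by omega)]
    rw [h2, h3] at h1
    have hp1 : 0 < p - 1 := by have := hp.two_le; omega
    rw [mul_comm (p ^ (r-1)) (p-1)] at h1
    exact Nat.eq_of_mul_eq_mul_left hp1 h1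
  have hkodd : Odd (Nat.card f.ker) := hker ▸ hodd.pow
  -- squaring is surjective on the kernel
  have hsqsurj : ∀ g : f.ker, ∃ k : f.ker, k ^ 2 = g := by
    intro g
    obtain ⟨t, ht⟩ := hkodd
    refine ⟨g ^ (t + 1), ?_⟩
    rw [← pow_mul]
    have : (t + 1) * 2 = Nat.card f.ker + 1 := by omega
    rw [this, pow_succ, pow_card_eq_one', one_mul]
  -- get a square root mod p
  obtain ⟨s, hs⟩ := hsq
  have hcu : IsUnit (ZMod.castHom hd (ZMod p) u) := by
    have := (f hu.unit).isUnit
    simpa [hf, ZMod.unitsMap_def] using this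
  have hs_unit : IsUnit s := isUnit_of_mul_isUnit_left (hs ▸ hcu : IsUnit (s * s))
  obtain ⟨w, hw⟩ := hsurj hs_unit.unit
  have hmem : hu.unit * (w ^ 2)⁻¹ ∈ f.ker := by
    rw [MonoidHom.mem_ker, map_mul, map_inv, map_pow, hw]
    have : f hu.unit = hs_unit.unit ^ 2 := by
      ext
      simpa [hf, ZMod.unitsMap_def, pow_two, hs_unit.unit_spec] using hs
    rw [this, mul_inv_cancel]
  obtain ⟨k, hk⟩ := hsqsurj ⟨_, hmem⟩
  have hk' : (k : (ZMod (p ^ r))ˣ) ^ 2 = hu.unit * (w ^ 2)⁻¹ := by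
    have := congrArg (Subtype.val) hk
    simpa using this
  have : hu.unit = (w * k) ^ 2 := by
    rw [mul_pow, hk']; rw [mul_comm (w^2) _, mul_assoc, inv_mul_cancel, mul_one]
  refine ⟨((w * k : (ZMod (p ^ r))ˣ) : ZMod (p ^ r)), ?_⟩
  rw [← hu.unit_spec, this]
  push_cast
  ring

lemma two_unit (hp : p.Prime) (hodd : Odd p) [NeZero (p ^ r)] :
    IsUnit (2 : ZMod (p ^ r)) := by
  have : ((2 : ℕ) : ZMod (p ^ r)) = 2 := by push_cast; ring
  rw [← this, ZMod.isUnit_iff_coprime]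
  exact (Nat.coprime_two_left.mpr hodd).pow_right r

lemma two_roots (hp : p.Prime) (hodd : Odd p) (hr : 1 ≤ r)
    (u : ZMod (p ^ r)) (hu : IsUnit u)
    (hsq : IsSquare (ZMod.castHom (dvd_pow_self p (Nat.one_le_iff_ne_zero.mp hr)) (ZMod p) u)) :
    Nat.card {b : ZMod (p ^ r) // b ^ 2 = u} = 2 := by
  haveI : NeZero (p ^ r) := ⟨pow_ne_zero r hp.ne_zero⟩
  haveI : Fact (1 < p ^ r) := ⟨by
    calc 1 < p := hp.one_lt
    _ ≤ p ^ r := Nat.le_self_pow (by omega) p⟩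
  obtain ⟨b, hb⟩ := sq_lift hp hodd hr u hu hsq
  have hbu : IsUnit b := isUnit_of_mul_isUnit_left (hb ▸ hu : IsUnit (b * b))
  have h2b : IsUnit (2 * b) := (two_unit hp hodd).mul hbu
  classical
  have hne : b ≠ -b := by
    intro hc
    have : (2 : ZMod (p ^ r)) * b = 0 := by linear_combination hc
    exact h2b.ne_zero this
  have hset : {x : ZMod (p ^ r) | x ^ 2 = u} = {b, -b} := by
    ext x
    simp only [Set.mem_setOf_eq, Set.mem_insert_iff, Set.mem_singleton_iff]
    constructor
    · intro h
      have hz : (x - b) * (x + b) = 0 := by linear_combination h + hb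
      by_cases hub : IsUnit (x - b)
      · right
        have : x + b = 0 := (hub.mul_right_eq_zero).mp hz
        linear_combination this
      · left
        have hpd : (p : ZMod (p ^ r)) ∣ (x - b) := by
          by_contra hc
          exact hub ((zmod_isUnit_iff hp hr _).mpr hc)
        have hub2 : IsUnit (x + b) := by
          rw [zmod_isUnit_iff hp hr]
          intro hc
          have : (p : ZMod (p ^ r)) ∣ 2 * b := by
            have : (x + b) - (x - b) = 2 * b := by ring
            exact this ▸ dvd_sub hc hpd
          exact ((zmod_isUnit_iff hp hr _).mp h2b) this
        have : x - b = 0 := (hub2.mul_right_eq_zero).mp (by rw [mul_comm] at hz; exact hz)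
        linear_combination this
    · rintro (rfl | rfl) <;> linear_combination -hb
  calc Nat.card {b : ZMod (p ^ r) // b ^ 2 = u}
      = Nat.card {x : ZMod (p ^ r) | x ^ 2 = u} :=
        Nat.card_congr (Equiv.subtypeEquivRight (fun x => by simp only [Set.mem_setOf_eq]))
    _ = ({b, -b} : Set (ZMod (p ^ r))).ncard := by rw [hset, Nat.card_coe_set_eq]
    _ = 2 := Set.ncard_pair hne

open Classical in
lemma count_fiber {p r : ℕ} (hp : p.Prime) (hodd : Odd p) (hr : 1 ≤ r)
    (δ : ZMod (p ^ r)) (hδ : ¬ (p : ZMod (p ^ r)) ∣ δ)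
    (hQR : IsSquare (ZMod.castHom (dvd_pow_self p (Nat.one_le_iff_ne_zero.mp hr)) (ZMod p) δ))
    (A : ZMod (p ^ r)) :
    Nat.card {bc : ZMod (p ^ r) × ZMod (p ^ r) // bc.1 ^ 2 - 4 * A * bc.2 = δ}
      = if (p : ZMod (p ^ r)) ∣ A then 2 * p ^ r else p ^ r := by
  haveI : NeZero (p ^ r) := ⟨pow_ne_zero r hp.ne_zero⟩
  classical
  by_cases hA : (p : ZMod (p ^ r)) ∣ A
  · rw [if_pos hA]
    have e2 : {bc : ZMod (p ^ r) × ZMod (p ^ r) // bc.1 ^ 2 - 4 * A * bc.2 = δ}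
        ≃ Σ C : ZMod (p ^ r), {B : ZMod (p ^ r) // B ^ 2 - 4 * A * C = δ} :=
      ((Equiv.prodComm _ _).subtypeEquiv (fun bc => by
          constructor <;> intro h <;> exact h)).trans
        (Equiv.subtypeProdEquivSigmaSubtype (fun C B => B ^ 2 - 4 * A * C = δ))
    rw [Nat.card_congr e2, Nat.card_eq_fintype_card, Fintype.card_sigma]
    have hfib : ∀ C : ZMod (p ^ r),
        Fintype.card {B : ZMod (p ^ r) // B ^ 2 - 4 * A * C = δ} = 2 := by
      intro C
      set u : ZMod (p ^ r) := δ + 4 * A * C with hu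
      have hdvd4AC : (p : ZMod (p ^ r)) ∣ 4 * A * C := (hA.mul_left 4).mul_right C
      have hnd : ¬ (p : ZMod (p ^ r)) ∣ u := by
        intro h
        exact hδ (by
          have : δ = u - 4 * A * C := by rw [hu]; ring
          rw [this]; exact dvd_sub h hdvd4AC)
      have huu : IsUnit u := (zmod_isUnit_iff hp hr u).mpr hnd
      have hcsq : IsSquare
          (ZMod.castHom (dvd_pow_self p (Nat.one_le_iff_ne_zero.mp hr)) (ZMod p) u) := by
        obtain ⟨a, ha⟩ := hA
        have : (ZMod.castHom (dvd_pow_self p (Nat.one_le_iff_ne_zero.mp hr)) (ZMod p)) u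
            = (ZMod.castHom (dvd_pow_self p (Nat.one_le_iff_ne_zero.mp hr)) (ZMod p)) δ := by
          rw [hu, ha]
          simp [map_add, map_mul, map_natCast, ZMod.natCast_self]
        rw [this]
        exact hQR
      have h2 := two_roots hp hodd hr u huu hcsq
      rw [Nat.card_eq_fintype_card] at h2
      exact (Fintype.card_congr (Equiv.subtypeEquivRight (fun B => by
        rw [hu, sub_eq_iff_eq_add]))).trans h2
    rw [Finset.sum_congr rfl (fun C _ => hfib C), Finset.sum_const, Finset.card_univ,
      ZMod.card, smul_eq_mul, mul_comm]
  · rw [if_neg hA]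
    have hAu : IsUnit A := (zmod_isUnit_iff hp hr A).mpr hA
    have h4 : IsUnit (4 * A) := by
      have h2u := two_unit (r := r) hp hodd
      have : (4 : ZMod (p ^ r)) = 2 * 2 := by norm_num
      rw [this, mul_assoc]
      exact h2u.mul (h2u.mul hAu)
    obtain ⟨v, hv⟩ := h4
    have e : {bc : ZMod (p ^ r) × ZMod (p ^ r) // bc.1 ^ 2 - 4 * A * bc.2 = δ}
        ≃ ZMod (p ^ r) :=
      { toFun := fun x => x.1.1
        invFun := fun B => ⟨(B, (v⁻¹ : (ZMod (p ^ r))ˣ) * (B ^ 2 - δ)), by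
          have h1 : (4 * A) * ((v⁻¹ : (ZMod (p ^ r))ˣ) * (B ^ 2 - δ)) = B ^ 2 - δ := by
            rw [← hv]
            exact Units.mul_inv_cancel_left _ _
          linear_combination -h1⟩
        left_inv := fun x => by
          obtain ⟨⟨B, C⟩, hx⟩ := x
          ext
          · rfl
          · show (v⁻¹ : (ZMod (p ^ r))ˣ) * (B ^ 2 - δ) = C
            have hBC : B ^ 2 - δ = (4 * A) * C := by linear_combination hx
            rw [hBC, ← hv]
            exact Units.inv_mul_cancel_left _ _
        right_inv := fun B => rfl }
    rw [Nat.card_congr e, Nat.card_eq_fintype_card, ZMod.card]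

open Classical in
lemma mult_count {p r : ℕ} (hp : p.Prime) (hr : 1 ≤ r) [NeZero (p ^ r)] :
    (Finset.univ.filter (fun A : ZMod (p ^ r) => (p : ZMod (p ^ r)) ∣ A)).card
      = p ^ (r - 1) := by
  classical
  rw [← Finset.card_range (p ^ (r - 1))]
  have hppos := hp.pos
  have hpr : p ^ r = p ^ (r - 1) * p := by rw [← pow_succ]; congr 1; omega
  refine Finset.card_bij' (fun A _ => A.val / p) (fun m _ => ((p * m : ℕ) : ZMod (p ^ r)))
    ?_ ?_ ?_ ?_
  · intro A hA
    rw [Finset.mem_filter] at hA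
    have hdvd : p ∣ A.val := (zmod_dvd_iff hr A).mp hA.2
    have hlt : A.val < p ^ r := ZMod.val_lt A
    rw [Finset.mem_range, Nat.div_lt_iff_lt_mul hppos]
    omega
  · intro m hm
    rw [Finset.mem_filter]
    refine ⟨Finset.mem_univ _, ?_⟩
    push_cast
    exact Dvd.intro _ rfl
  · intro A hA
    rw [Finset.mem_filter] at hA
    have hdvd : p ∣ A.val := (zmod_dvd_iff hr A).mp hA.2
    show ((p * (A.val / p) : ℕ) : ZMod (p ^ r)) = A
    rw [Nat.mul_div_cancel' hdvd]
    exact ZMod.natCast_rightInverse A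
  · intro m hm
    rw [Finset.mem_range] at hm
    have hlt : p * m < p ^ r := by
      rw [hpr, mul_comm (p ^ (r-1)) p]
      exact (Nat.mul_lt_mul_left hppos).mpr hm
    show (((p * m : ℕ) : ZMod (p ^ r))).val / p = m
    rw [ZMod.val_natCast, Nat.mod_eq_of_lt hlt, Nat.mul_div_cancel_left m hppos]

theorem stmt_2 (p r : ℕ) (hp : p.Prime) (hodd : Odd p) (hr : 1 ≤ r)
    (δ : ZMod (p ^ r)) (hδ : ¬ (p : ZMod (p ^ r)) ∣ δ)
    (hQR : IsSquare (ZMod.castHom (dvd_pow_self p (Nat.one_le_iff_ne_zero.mp hr)) (ZMod p) δ)) :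
    Nat.card {x : ZMod (p ^ r) × ZMod (p ^ r) × ZMod (p ^ r) //
        ¬ ((p : ZMod (p ^ r)) ∣ x.1 ∧ (p : ZMod (p ^ r)) ∣ x.2.1 ∧ (p : ZMod (p ^ r)) ∣ x.2.2)
        ∧ x.2.1 ^ 2 - 4 * x.1 * x.2.2 = δ}
      = p ^ (2 * r - 1) * (p + 1) := by
  haveI : NeZero (p ^ r) := ⟨pow_ne_zero r hp.ne_zero⟩
  classical
  have e0 : {x : ZMod (p ^ r) × ZMod (p ^ r) × ZMod (p ^ r) //
        ¬ ((p : ZMod (p ^ r)) ∣ x.1 ∧ (p : ZMod (p ^ r)) ∣ x.2.1 ∧ (p : ZMod (p ^ r)) ∣ x.2.2)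
        ∧ x.2.1 ^ 2 - 4 * x.1 * x.2.2 = δ}
      ≃ {x : ZMod (p ^ r) × ZMod (p ^ r) × ZMod (p ^ r) //
          x.2.1 ^ 2 - 4 * x.1 * x.2.2 = δ} := by
    refine Equiv.subtypeEquivRight (fun x => ?_)
    constructor
    · exact fun h => h.2
    · intro h
      refine ⟨?_, h⟩
      rintro ⟨h1, h2, h3⟩
      refine hδ ?_
      rw [← h]
      exact dvd_sub (dvd_pow h2 two_ne_zero) ((h1.mul_left 4).mul_right _)
  have e1 : {x : ZMod (p ^ r) × ZMod (p ^ r) × ZMod (p ^ r) //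
        x.2.1 ^ 2 - 4 * x.1 * x.2.2 = δ}
      ≃ Σ A : ZMod (p ^ r),
          {bc : ZMod (p ^ r) × ZMod (p ^ r) // bc.1 ^ 2 - 4 * A * bc.2 = δ} :=
    Equiv.subtypeProdEquivSigmaSubtype (fun (A : ZMod (p ^ r)) (bc : ZMod (p ^ r) × ZMod (p ^ r)) => bc.1 ^ 2 - 4 * A * bc.2 = δ)
  rw [Nat.card_congr (e0.trans e1), Nat.card_eq_fintype_card, Fintype.card_sigma]
  have key : ∀ A : ZMod (p ^ r),
      Fintype.card {bc : ZMod (p ^ r) × ZMod (p ^ r) // bc.1 ^ 2 - 4 * A * bc.2 = δ}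
        = if (p : ZMod (p ^ r)) ∣ A then 2 * p ^ r else p ^ r := by
    intro A
    rw [← Nat.card_eq_fintype_card]
    convert count_fiber hp hodd hr δ hδ hQR A
  rw [Finset.sum_congr rfl (fun A _ => key A), Finset.sum_ite, Finset.sum_const,
    Finset.sum_const, smul_eq_mul, smul_eq_mul, mult_count hp hr]
  have hnc : (Finset.univ.filter
      (fun A : ZMod (p ^ r) => ¬ (p : ZMod (p ^ r)) ∣ A)).card = p ^ r - p ^ (r - 1) := by
    have := Finset.card_filter_add_card_filter_not (s := Finset.univ)
      (p := fun A : ZMod (p ^ r) => (p : ZMod (p ^ r)) ∣ A)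
    rw [mult_count hp hr, Finset.card_univ, ZMod.card] at this
    omega
  rw [hnc]
  -- arithmetic
  obtain ⟨s, rfl⟩ : ∃ s, r = s + 1 := ⟨r - 1, by omega⟩
  obtain ⟨t, rfl⟩ : ∃ t, p = t + 1 := ⟨p - 1, by have := hp.pos; omega⟩
  have h1 : (t + 1) ^ (s + 1) = (t + 1) ^ s * (t + 1) := pow_succ _ _
  have h2 : s + 1 - 1 = s := by omega
  have h3 : 2 * (s + 1) - 1 = s + s + 1 := by omega
  have h4 : (t + 1) ^ (s + s + 1) = (t + 1) ^ s * (t + 1) ^ s * (t + 1) := by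
    rw [pow_succ, pow_add]
  rw [h1, h2, h3, h4]
  set a := (t + 1) ^ s with ha
  have h5 : a * (t + 1) - a = a * t := by rw [Nat.mul_add, Nat.mul_one]; omega
  rw [h5]
  ring
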